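/- Let q be a prime power, 0 < f ≤ e, with q > e, and d = (q-e)(q+f). Given an RBD on d points with r parallel classes, intersection number μ = 1, and all block sizes lying in {q-e, q-e+1, ..., q-e+f, q}, the bases constructed by applying (complex) Hadamard/unitary matrices of matching orders to each block satisfy: for any two basis vectors |ψ⟩, |φ⟩ from bases arising from different parallel classes, |⟨ψ|φ⟩| ≤ 1/(q-e), i.e., |⟨ψ|φ⟩| ≤ β/√d with β = √((q+f)/(q-e)). -/

import Mathlib

theorem amub_inner_product_bound (q e f d : ℕ)
    (hq : ∃ (p n : ℕ), p.Prime ∧ q = p ^ (n + 1))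
    (hf : 0 < f) (hfe : f ≤ e) (heq : e < q)
    (hd : d = (q - e) * (q + f))
    (b₁ b₂ : Finset (Fin d)) (hmeet : (b₁ ∩ b₂).card ≤ 1)
    (hb₁lo : q - e ≤ b₁.card) (hb₂lo : q - e ≤ b₂.card)
    (hb₁hi : b₁.card ≤ q) (hb₂hi : b₂.card ≤ q)
    (ψ φ : Fin d → ℂ)
    (hψ0 : ∀ i ∉ b₁, ψ i = 0)
    (hψ : ∀ i ∈ b₁, ‖ψ i‖ = 1 / Real.sqrt (b₁.card))
    (hφ0 : ∀ i ∉ b₂, φ i = 0)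
    (hφ : ∀ i ∈ b₂, ‖φ i‖ = 1 / Real.sqrt (b₂.card)) :
    ‖∑ i, (starRingEnd ℂ) (ψ i) * φ i‖ ≤ 1 / ((q : ℝ) - e) ∧
    1 / ((q : ℝ) - e) = Real.sqrt (((q : ℝ) + f) / ((q : ℝ) - e)) / Real.sqrt d := by
  have hqe : (0:ℝ) < (q:ℝ) - e := by
    have : (e:ℝ) < q := by exact_mod_cast heq
    linarith
  have hqecast : ((q - e : ℕ) : ℝ) = (q:ℝ) - e := by
    push_cast [Nat.cast_sub heq.le]; ring
  have hsqe : (0:ℝ) < Real.sqrt ((q:ℝ) - e) := Real.sqrt_pos.mpr hqe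
  have key : ∀ (b : Finset (Fin d)), q - e ≤ b.card →
      1 / Real.sqrt (b.card) ≤ 1 / Real.sqrt ((q:ℝ) - e) := by
    intro b hb
    have hle : ((q:ℝ) - e) ≤ (b.card : ℝ) := by
      rw [← hqecast]; exact_mod_cast hb
    exact one_div_le_one_div_of_le hsqe (Real.sqrt_le_sqrt hle)
  constructor
  · have hsum : ∑ i, (starRingEnd ℂ) (ψ i) * φ i
        = ∑ i ∈ b₁ ∩ b₂, (starRingEnd ℂ) (ψ i) * φ i := by
      refine (Finset.sum_subset (Finset.subset_univ _) ?_).symm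
      intro i _ hi
      by_cases h : i ∈ b₁
      · have h2 : i ∉ b₂ := fun h2 => hi (Finset.mem_inter.mpr ⟨h, h2⟩)
        simp [hφ0 i h2]
      · simp [hψ0 i h]
    rw [hsum]
    calc ‖∑ i ∈ b₁ ∩ b₂, (starRingEnd ℂ) (ψ i) * φ i‖
        ≤ ∑ i ∈ b₁ ∩ b₂, ‖(starRingEnd ℂ) (ψ i) * φ i‖ :=
          norm_sum_le _ _
      _ ≤ ∑ _i ∈ b₁ ∩ b₂, 1 / ((q:ℝ) - e) := by
          refine Finset.sum_le_sum ?_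
          intro i hi
          obtain ⟨hi1, hi2⟩ := Finset.mem_inter.mp hi
          rw [norm_mul, Complex.norm_conj, hψ i hi1, hφ i hi2]
          have h1 := key b₁ hb₁lo
          have h2 := key b₂ hb₂lo
          have hs1 : (0:ℝ) ≤ 1 / Real.sqrt (b₁.card) := by positivity
          have hs2 : (0:ℝ) ≤ 1 / Real.sqrt ((q:ℝ) - e) := by positivity
          calc 1 / Real.sqrt (b₁.card) * (1 / Real.sqrt (b₂.card))
              ≤ 1 / Real.sqrt ((q:ℝ) - e) * (1 / Real.sqrt ((q:ℝ) - e)) :=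
                mul_le_mul h1 h2 (by positivity) hs2
            _ = 1 / ((q:ℝ) - e) := by
                rw [div_mul_div_comm, one_mul, Real.mul_self_sqrt hqe.le]
      _ = ((b₁ ∩ b₂).card : ℝ) * (1 / ((q:ℝ) - e)) := by
          rw [Finset.sum_const, nsmul_eq_mul]
      _ ≤ 1 * (1 / ((q:ℝ) - e)) := by
          have : ((b₁ ∩ b₂).card : ℝ) ≤ 1 := by exact_mod_cast hmeet
          apply mul_le_mul_of_nonneg_right this (by positivity)
      _ = 1 / ((q:ℝ) - e) := one_mul _
  · have hfq : (0:ℝ) < (q:ℝ) + f := by positivity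
    have hdcast : (d:ℝ) = ((q:ℝ) - e) * ((q:ℝ) + f) := by
      rw [hd]; push_cast [Nat.cast_sub heq.le]; ring
    have hsqf : (0:ℝ) < Real.sqrt ((q:ℝ) + f) := Real.sqrt_pos.mpr hfq
    rw [hdcast, Real.sqrt_mul hqe.le, Real.sqrt_div hfq.le]
    rw [div_div, ← mul_assoc, Real.mul_self_sqrt hqe.le,
      mul_comm ((q:ℝ)-e), ← div_div, div_self hsqf.ne']
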